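/- Let A' = (A, 0, -, +) be a finite abelian group preserved (in the sense that the relation x+y = z+u is preserved) by an m-ary idempotent WNU operation Ω, and let p be the maximal order of an element of A'. Then m and p are coprime; in particular, for every prime q dividing the order of some element of A', q divides m - 1 when Ω(x₁,...,x_m) = x₁ + ... + x_m. -/

import Mathlib

/-- Let `A` be a finite abelian group whose relation `x + y = z + u` is preserved
by an `m`-ary idempotent WNU operation `Ω`, and let `p` (the exponent of the
group) be the maximal order of an element. Then `m` and `p` are coprime; in
particular, if `Ω(x₁,...,x_m) = x₁ + ... + x_m`, then every prime `q` dividing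
the order of some element of `A` divides `m - 1`. -/
theorem wnu_arity_coprime_exponent {A : Type*} [Fintype A] [AddCommGroup A]
    {m : ℕ} (Ω : (Fin m → A) → A)
    (hIdem : ∀ x : A, Ω (fun _ => x) = x)
    (hWNU : ∀ (x y : A) (i j : Fin m),
      Ω (Function.update (fun _ => x) i y) = Ω (Function.update (fun _ => x) j y))
    (hPres : ∀ x y z u : Fin m → A,
      (∀ i, x i + y i = z i + u i) → Ω x + Ω y = Ω z + Ω u) :
    Nat.Coprime m (AddMonoid.exponent A) ∧
      ((∀ x : Fin m → A, Ω x = ∑ i, x i) →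
        ∀ q : ℕ, q.Prime → (∃ a : A, q ∣ addOrderOf a) → q ∣ m - 1) := by
  constructor
  · -- coprimality of m and the exponent
    rcases Nat.eq_zero_or_pos m with hm0 | hm0
    · -- m = 0 : A is a subsingleton, exponent 1
      subst hm0
      have hsub : ∀ a b : A, a = b := by
        intro a b
        have h1 := hIdem a
        have h2 := hIdem b
        have : (fun _ : Fin 0 => a) = (fun _ : Fin 0 => b) := by
          funext i; exact absurd i.2 (by omega)
        rw [this, h2] at h1
        exact h1.symm
      have : Subsingleton A := ⟨hsub⟩
      have : AddMonoid.exponent A = 1 := AddMonoid.exp_eq_one_of_subsingleton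
      rw [this]
      exact Nat.coprime_one_right 0
    · -- m ≥ 1
      have hzero : Ω 0 = 0 := by
        have := hIdem 0
        exact this
      have hadd : ∀ x y : Fin m → A, Ω (x + y) = Ω x + Ω y := by
        intro x y
        have := hPres x y (x + y) 0 (fun i => by simp)
        rw [hzero, add_zero] at this
        exact this.symm
      set i0 : Fin m := ⟨0, hm0⟩
      have hsingle : ∀ (a : A) (i : Fin m),
          Ω (Pi.single i a) = Ω (Pi.single i0 a) := by
        intro a i
        have := hWNU 0 a i i0
        have hupd : ∀ j : Fin m, Function.update (fun _ : Fin m => (0 : A)) j a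
            = Pi.single j a := by
          intro j; rfl
        rwa [hupd, hupd] at this
      -- m • h a = a where h a = Ω (Pi.single i0 a)
      have hsurj : ∀ a : A, m • Ω (Pi.single i0 a) = a := by
        intro a
        have hdecomp : (fun _ : Fin m => a) = ∑ i : Fin m, Pi.single i a := by
          rw [← Finset.univ_sum_single (fun _ : Fin m => a)]
        have hΩsum : Ω (∑ i : Fin m, Pi.single i a)
            = ∑ i : Fin m, Ω (Pi.single i a) := by
          classical
          induction (Finset.univ : Finset (Fin m)) using Finset.induction with
          | empty => simpa using hzero
          | insert _ _ hne ih =>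
            rw [Finset.sum_insert hne, Finset.sum_insert hne, hadd, ih]
        have := hIdem a
        rw [hdecomp, hΩsum] at this
        calc m • Ω (Pi.single i0 a) = ∑ _i : Fin m, Ω (Pi.single i0 a) := by
              simp
          _ = ∑ i : Fin m, Ω (Pi.single i a) := by
              exact Finset.sum_congr rfl fun i _ => (hsingle a i).symm
          _ = a := this
      -- the map x ↦ m • x is surjective, hence injective
      have hsurjf : Function.Surjective (fun x : A => m • x) :=
        fun a => ⟨Ω (Pi.single i0 a), hsurj a⟩
      have hinjf : Function.Injective (fun x : A => m • x) :=
        (Finite.injective_iff_surjective).mpr hsurjf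
      by_contra hcop
      set q := (Nat.gcd m (AddMonoid.exponent A)).minFac with hq
      have hgcdne : Nat.gcd m (AddMonoid.exponent A) ≠ 1 := hcop
      have hqprime : q.Prime := Nat.minFac_prime hgcdne
      have hqm : q ∣ m := (Nat.minFac_dvd _).trans (Nat.gcd_dvd_left _ _)
      have hqe : q ∣ AddMonoid.exponent A :=
        (Nat.minFac_dvd _).trans (Nat.gcd_dvd_right _ _)
      have hqcard : q ∣ Fintype.card A :=
        hqe.trans (AddGroup.exponent_dvd_card)
      haveI : Fact q.Prime := ⟨hqprime⟩
      obtain ⟨a, ha⟩ := exists_prime_addOrderOf_dvd_card q hqcard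
      have hane : a ≠ 0 := by
        intro h
        rw [h, addOrderOf_zero] at ha
        exact hqprime.one_lt.ne' ha.symm
      have hma : m • a = 0 := by
        obtain ⟨k, hk⟩ := hqm
        have : q • a = 0 := by
          rw [← ha]; exact addOrderOf_nsmul_eq_zero a
        rw [hk, mul_nsmul, this, nsmul_zero]
      have : a = 0 := hinjf (by simpa using hma)
      exact hane this
  · -- the "sum" case
    intro hSum q hq ⟨a, ha⟩
    rcases Nat.eq_zero_or_pos m with hm0 | hm0
    · subst hm0; simp
    · have h1 : m • a = a := by
        have := hIdem a
        rw [hSum] at this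
        simpa using this
      have h2 : (m - 1) • a = 0 := by
        have h3 : (m - 1) • a + a = 0 + a := by
          have : (m - 1) • a + a = m • a := by
            rw [← succ_nsmul, Nat.sub_add_cancel hm0]
          rw [this, h1, zero_add]
        exact add_right_cancel h3
      have : addOrderOf a ∣ m - 1 := addOrderOf_dvd_of_nsmul_eq_zero h2
      exact ha.trans this
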